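/- Let V = k((z)) and ∇ = d/dz + z⁻¹f with f ∈ k[z⁻¹], ord(f) = −m < 0. Then with respect to the norm ||g|| = ε^{ord(g)}, the operator z∇ : V → V is an invertible similitude with ||z∇(v)|| = ε^{−m}||v|| for all v ≠ 0, and consequently ||(z∇)⁻¹||_inf = ε^{m} = ε^{−ord(f)}. -/

import Mathlib

open scoped Classical
noncomputable section

def lval {k : Type*} [Field k] (ε : ℝ) (f : LaurentSeries k) : ℝ :=
  if f = 0 then 0 else ε ^ (HahnSeries.order f)

structure NANorm (k : Type*) [Field k] (ε : ℝ) (V : Type*) [AddCommGroup V]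
    [Module (LaurentSeries k) V] where
  N : V → ℝ
  pos : ∀ v : V, v ≠ 0 → 0 < N v
  map_zero' : N 0 = 0
  ultra : ∀ v w : V, N (v + w) ≤ max (N v) (N w)
  smul' : ∀ (f : LaurentSeries k) (v : V), N (f • v) = lval ε f * N v

/-- The operator norm `‖A‖ = sup_{v ≠ 0} ‖A v‖ / ‖v‖` of a map `A : V → V`
with respect to a non-archimedean norm on `V`. -/
def opNorm {k : Type*} [Field k] {ε : ℝ} {V : Type*} [AddCommGroup V]
    [Module (LaurentSeries k) V] (nn : NANorm k ε V) (A : V → V) : ℝ :=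
  sSup {r : ℝ | ∃ v : V, v ≠ 0 ∧ r = nn.N (A v) / nn.N v}

def infNorm {k : Type*} [Field k] (ε : ℝ) {V : Type*} [AddCommGroup V]
    [Module (LaurentSeries k) V] (A : V → V) : ℝ :=
  sInf {r : ℝ | ∃ nn : NANorm k ε V, r = opNorm nn A}

/-- The operator `z∇ : g ↦ z g' + f g` on `K = k((z))`. -/
def zNabla {k : Type*} [Field k] (f : LaurentSeries k) (g : LaurentSeries k) : LaurentSeries k :=
  HahnSeries.single (1 : ℤ) (1 : k) * LaurentSeries.derivative k g + f * g

namespace ZNablaAux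

variable {k : Type*} [Field k]

lemma sum_coeff {α : Type*} (s : Finset α) (F : α → LaurentSeries k) (n : ℤ) :
    (∑ i ∈ s, F i).coeff n = ∑ i ∈ s, (F i).coeff n :=
  map_sum (HahnSeries.coeff.addMonoidHom n) F s

lemma zmul_deriv_coeff (g : LaurentSeries k) (n : ℤ) :
    (HahnSeries.single (1 : ℤ) (1 : k) * LaurentSeries.derivative k g).coeff n
      = n • g.coeff n := by
  have h0 : (HahnSeries.single (1 : ℤ) (1 : k) * LaurentSeries.derivative k g).coeff n
      = (LaurentSeries.derivative k g).coeff (n - 1) := by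
    conv_lhs => rw [show n = (n - 1) + 1 by ring]
    rw [HahnSeries.coeff_single_mul_add, one_mul]
  rw [h0, LaurentSeries.derivative_apply, LaurentSeries.hasseDeriv_coeff]
  have h2 : (n - 1) + ((1 : ℕ) : ℤ) = n := by push_cast; ring
  rw [h2, Ring.choose_one_right]

lemma f_eq_sum (m : ℕ) (f : LaurentSeries k) (hford : HahnSeries.order f = -(m : ℤ))
    (hpoly : ∀ n : ℤ, 0 < n → f.coeff n = 0) :
    f = ∑ i ∈ Finset.range (m + 1),
        HahnSeries.single (-(i : ℤ)) (f.coeff (-(i : ℤ))) := by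
  ext j
  rw [sum_coeff]
  simp only [HahnSeries.coeff_single]
  by_cases hj1 : 0 < j
  · rw [hpoly j hj1]
    apply (Finset.sum_eq_zero ?_).symm
    intro i _
    rw [if_neg (by omega)]
  by_cases hj2 : j < -(m : ℤ)
  · rw [HahnSeries.coeff_eq_zero_of_lt_order (by rw [hford]; exact hj2)]
    apply (Finset.sum_eq_zero ?_).symm
    intro i hi
    simp only [Finset.mem_range] at hi
    rw [if_neg (by omega)]
  · push_neg at hj1 hj2
    have hmem : (-j).toNat ∈ Finset.range (m + 1) := by
      simp only [Finset.mem_range]; omega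
    rw [Finset.sum_eq_single_of_mem _ hmem]
    · rw [if_pos (by omega)]
      congr 1
      omega
    · intro i hi hne
      rw [if_neg (by simp only [Finset.mem_range] at hi; intro h; apply hne; omega)]

lemma fmul_coeff (m : ℕ) (f : LaurentSeries k) (hford : HahnSeries.order f = -(m : ℤ))
    (hpoly : ∀ n : ℤ, 0 < n → f.coeff n = 0) (g : LaurentSeries k) (n : ℤ) :
    (f * g).coeff n
      = ∑ i ∈ Finset.range (m + 1), f.coeff (-(i : ℤ)) * g.coeff (n + i) := by
  conv_lhs => rw [f_eq_sum m f hford hpoly]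
  rw [Finset.sum_mul, sum_coeff]
  refine Finset.sum_congr rfl ?_
  intro i _
  conv_lhs => rw [show n = (n + i) + (-(i : ℤ)) by ring]
  rw [HahnSeries.coeff_single_mul_add]

lemma zNabla_coeff (m : ℕ) (f : LaurentSeries k) (hford : HahnSeries.order f = -(m : ℤ))
    (hpoly : ∀ n : ℤ, 0 < n → f.coeff n = 0) (g : LaurentSeries k) (n : ℤ) :
    (zNabla f g).coeff n
      = n • g.coeff n + ∑ i ∈ Finset.range (m + 1), f.coeff (-(i : ℤ)) * g.coeff (n + i) := by
  rw [zNabla, HahnSeries.coeff_add, zmul_deriv_coeff, fmul_coeff m f hford hpoly]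

lemma f_ne_zero (m : ℕ) (hm : 0 < m) (f : LaurentSeries k)
    (hford : HahnSeries.order f = -(m : ℤ)) : f ≠ 0 := by
  intro h
  rw [h, HahnSeries.order_zero] at hford
  omega

lemma f_lead_ne_zero (m : ℕ) (hm : 0 < m) (f : LaurentSeries k)
    (hford : HahnSeries.order f = -(m : ℤ)) : f.coeff (-(m : ℤ)) ≠ 0 := by
  have := mt HahnSeries.coeff_order_eq_zero.mp (f_ne_zero m hm f hford)
  rwa [hford] at this

lemma zNabla_coeff_lead (m : ℕ) (hm : 0 < m) (f : LaurentSeries k)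
    (hford : HahnSeries.order f = -(m : ℤ)) (hpoly : ∀ n : ℤ, 0 < n → f.coeff n = 0)
    (g : LaurentSeries k) :
    (zNabla f g).coeff (g.order - m) = f.coeff (-(m : ℤ)) * g.coeff g.order := by
  rw [zNabla_coeff m f hford hpoly]
  have h1 : g.coeff (g.order - m) = 0 :=
    HahnSeries.coeff_eq_zero_of_lt_order (x := g) (by omega)
  rw [h1, smul_zero, zero_add, Finset.sum_range_succ]
  have h2 : ∑ i ∈ Finset.range m, f.coeff (-(i : ℤ)) * g.coeff (g.order - m + i) = 0 := by
    apply Finset.sum_eq_zero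
    intro i hi
    simp only [Finset.mem_range] at hi
    rw [HahnSeries.coeff_eq_zero_of_lt_order (x := g) (by omega), mul_zero]
  rw [h2, zero_add, show g.order - (m : ℤ) + m = g.order by omega]

lemma zNabla_coeff_low (m : ℕ) (f : LaurentSeries k)
    (hford : HahnSeries.order f = -(m : ℤ)) (hpoly : ∀ n : ℤ, 0 < n → f.coeff n = 0)
    (g : LaurentSeries k) (n : ℤ) (hn : n < g.order - m) :
    (zNabla f g).coeff n = 0 := by
  rw [zNabla_coeff m f hford hpoly]
  rw [HahnSeries.coeff_eq_zero_of_lt_order (x := g) (by omega), smul_zero, zero_add]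
  apply Finset.sum_eq_zero
  intro i hi
  simp only [Finset.mem_range] at hi
  rw [HahnSeries.coeff_eq_zero_of_lt_order (x := g) (by omega), mul_zero]

lemma zNabla_ne_zero (m : ℕ) (hm : 0 < m) (f : LaurentSeries k)
    (hford : HahnSeries.order f = -(m : ℤ)) (hpoly : ∀ n : ℤ, 0 < n → f.coeff n = 0)
    (g : LaurentSeries k) (hg : g ≠ 0) : zNabla f g ≠ 0 := by
  intro h
  have := zNabla_coeff_lead m hm f hford hpoly g
  rw [h, HahnSeries.coeff_zero] at this
  exact mul_ne_zero (f_lead_ne_zero m hm f hford) (mt HahnSeries.coeff_order_eq_zero.mp hg) this.symm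

lemma zNabla_order (m : ℕ) (hm : 0 < m) (f : LaurentSeries k)
    (hford : HahnSeries.order f = -(m : ℤ)) (hpoly : ∀ n : ℤ, 0 < n → f.coeff n = 0)
    (g : LaurentSeries k) (hg : g ≠ 0) :
    (zNabla f g).order = g.order - m := by
  have hne : (zNabla f g).coeff (g.order - m) ≠ 0 := by
    rw [zNabla_coeff_lead m hm f hford hpoly]
    exact mul_ne_zero (f_lead_ne_zero m hm f hford) (mt HahnSeries.coeff_order_eq_zero.mp hg)
  have h1 : (zNabla f g).order ≤ g.order - m := HahnSeries.order_le_of_coeff_ne_zero hne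
  rcases lt_or_eq_of_le h1 with h2 | h2
  · exfalso
    have := zNabla_coeff_low m f hford hpoly g _ h2
    exact mt HahnSeries.coeff_order_eq_zero.mp (zNabla_ne_zero m hm f hford hpoly g hg) this
  · exact h2

lemma zNabla_sub (f : LaurentSeries k) (a b : LaurentSeries k) :
    zNabla f (a - b) = zNabla f a - zNabla f b := by
  simp only [zNabla, map_sub, mul_sub]
  ring

lemma zNabla_zero (f : LaurentSeries k) : zNabla f 0 = 0 := by
  simp [zNabla]

/-- The recursively defined coefficients of the solution of `z∇ g = h`. -/
def solC (m : ℕ) (f h : LaurentSeries k) (N : ℤ) : ℕ → k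
  | j =>
    (h.coeff (N + j)
      - (N + (j : ℤ)) • (if _ : 0 < m ∧ m ≤ j then solC m f h N (j - m) else 0)
      - ∑ i ∈ (Finset.range m).attach,
          f.coeff (-(i.1 : ℤ)) *
            (if _ : m ≤ j + i.1 then solC m f h N (j + i.1 - m) else 0))
      / f.coeff (-(m : ℤ))
  termination_by j => j
  decreasing_by
  · omega
  · have := i.2
    simp only [Finset.mem_range] at this
    omega

/-- The coefficient function of the solution. -/
def solFun (m : ℕ) (f h : LaurentSeries k) (N : ℤ) : ℤ → k :=
  fun n => if N + m ≤ n then solC m f h N (n - (N + m)).toNat else 0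

lemma solFun_low (m : ℕ) (f h : LaurentSeries k) (N : ℤ) (n : ℤ) (hn : n < N + m) :
    solFun m f h N n = 0 := if_neg (by omega)

/-- The solution of `z∇ g = h`. -/
def sol (m : ℕ) (f h : LaurentSeries k) (N : ℤ) : LaurentSeries k :=
  HahnSeries.ofSuppBddBelow (solFun m f h N)
    (HahnSeries.forallLTEqZero_supp_BddBelow _ (N + m) (solFun_low m f h N))

lemma sol_coeff (m : ℕ) (f h : LaurentSeries k) (N : ℤ) (n : ℤ) :
    (sol m f h N).coeff n = solFun m f h N n := rfl

lemma zNabla_sol (m : ℕ) (hm : 0 < m) (f : LaurentSeries k)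
    (hford : HahnSeries.order f = -(m : ℤ)) (hpoly : ∀ n : ℤ, 0 < n → f.coeff n = 0)
    (h : LaurentSeries k) :
    zNabla f (sol m f h h.order) = h := by
  set N := h.order with hN
  ext n
  rw [zNabla_coeff m f hford hpoly, Finset.sum_range_succ]
  by_cases hn : n < N
  · rw [HahnSeries.coeff_eq_zero_of_lt_order (x := h) (by omega)]
    rw [sol_coeff, solFun_low m f h N n (by omega), smul_zero, zero_add]
    rw [sol_coeff, solFun_low m f h N _ (by omega), mul_zero, add_zero]
    apply Finset.sum_eq_zero
    intro i hi
    simp only [Finset.mem_range] at hi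
    rw [sol_coeff, solFun_low m f h N _ (by omega), mul_zero]
  · push_neg at hn
    set j : ℕ := (n - N).toNat with hj
    have hnj : n = N + j := by omega
    have hlast : (sol m f h N).coeff (n + m) = solC m f h N j := by
      rw [sol_coeff, solFun, if_pos (by omega)]
      congr 1
      omega
    rw [hlast, solC]
    rw [mul_div_cancel₀ _ (f_lead_ne_zero m hm f hford)]
    have hA : n • (sol m f h N).coeff n
        = (N + (j : ℤ)) • (if _ : 0 < m ∧ m ≤ j then solC m f h N (j - m) else 0) := by
      rw [sol_coeff, solFun]
      by_cases hc : m ≤ j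
      · rw [if_pos (by omega), dif_pos ⟨hm, hc⟩, hnj]
        congr 2
        omega
      · rw [if_neg (by omega), dif_neg (by omega), smul_zero, smul_zero]
    have hB : ∑ i ∈ Finset.range m, f.coeff (-(i : ℤ)) * (sol m f h N).coeff (n + i)
        = ∑ i ∈ (Finset.range m).attach,
            f.coeff (-(i.1 : ℤ)) *
              (if _ : m ≤ j + i.1 then solC m f h N (j + i.1 - m) else 0) := by
      rw [Finset.sum_attach (Finset.range m)
        (fun i => f.coeff (-(i : ℤ)) * (if _ : m ≤ j + i then solC m f h N (j + i - m) else 0))]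
      refine Finset.sum_congr rfl ?_
      intro i hi
      simp only [Finset.mem_range] at hi
      congr 1
      rw [sol_coeff, solFun]
      by_cases hc : m ≤ j + i
      · rw [if_pos (by omega), dif_pos hc]
        congr 1
        omega
      · rw [if_neg (by omega), dif_neg hc]
    rw [hA, hB, hnj]
    ring

lemma lval_nonneg {ε : ℝ} (hε0 : 0 < ε) (v : LaurentSeries k) : 0 ≤ lval ε v := by
  unfold lval
  split
  · exact le_refl 0
  · exact (zpow_pos hε0 _).le

end ZNablaAux

/-- For `∇ = d/dz + z⁻¹f` with `f ∈ k[z⁻¹]` of order `-m < 0`, the operator `z∇` is an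
invertible similitude of ratio `ε^{-m}` for the standard norm `‖g‖ = ε^{ord g}`,
and `‖(z∇)⁻¹‖_inf = ε^m = ε^{-ord f}`. -/
theorem zNabla_similitude (k : Type*) [Field k] [IsAlgClosed k] [CharZero k]
    (ε : ℝ) (hε0 : 0 < ε) (hε1 : ε < 1)
    (m : ℕ) (hm : 0 < m) (f : LaurentSeries k) (hford : HahnSeries.order f = -(m : ℤ))
    (hpoly : ∀ n : ℤ, 0 < n → f.coeff n = 0) :
    Function.Bijective (zNabla f) ∧
    (∀ v : LaurentSeries k, v ≠ 0 → lval ε (zNabla f v) = ε ^ (-(m : ℤ)) * lval ε v) ∧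
    infNorm (k := k) ε (Function.invFun (zNabla f)) = ε ^ (m : ℤ) := by
  have hsim : ∀ v : LaurentSeries k, v ≠ 0 →
      lval ε (zNabla f v) = ε ^ (-(m : ℤ)) * lval ε v := by
    intro v hv
    have hne := ZNablaAux.zNabla_ne_zero m hm f hford hpoly v hv
    rw [lval, if_neg hne, lval, if_neg hv, ZNablaAux.zNabla_order m hm f hford hpoly v hv,
      show HahnSeries.order v - (m : ℤ) = -(m : ℤ) + HahnSeries.order v by ring,
      zpow_add₀ hε0.ne']
  have hinj : Function.Injective (zNabla f) := by
    intro a b hab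
    by_contra hne
    have hsub : a - b ≠ 0 := sub_ne_zero.mpr hne
    have h0 : zNabla f (a - b) = 0 := by rw [ZNablaAux.zNabla_sub, hab, sub_self]
    exact ZNablaAux.zNabla_ne_zero m hm f hford hpoly _ hsub h0
  have hsurj : Function.Surjective (zNabla f) := fun h =>
    ⟨ZNablaAux.sol m f h h.order, ZNablaAux.zNabla_sol m hm f hford hpoly h⟩
  have hbij : Function.Bijective (zNabla f) := ⟨hinj, hsurj⟩
  refine ⟨hbij, hsim, ?_⟩
  set A := Function.invFun (zNabla f) with hA
  have hright : ∀ v, zNabla f (A v) = v := Function.rightInverse_invFun hsurj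
  have hAne : ∀ v : LaurentSeries k, v ≠ 0 → A v ≠ 0 := by
    intro v hv h0
    apply hv
    rw [← hright v, h0, ZNablaAux.zNabla_zero]
  have hAval : ∀ v : LaurentSeries k, v ≠ 0 → lval ε (A v) = ε ^ (m : ℤ) * lval ε v := by
    intro v hv
    have hx := hsim (A v) (hAne v hv)
    rw [hright v] at hx
    rw [hx, ← mul_assoc, ← zpow_add₀ hε0.ne']
    simp
  have hNemul : ∀ (nn : NANorm k ε (LaurentSeries k)) (v : LaurentSeries k),
      nn.N v = lval ε v * nn.N 1 := by
    intro nn v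
    have hx := nn.smul' v 1
    rwa [smul_eq_mul, mul_one] at hx
  have hop : ∀ nn : NANorm k ε (LaurentSeries k), opNorm nn A = ε ^ (m : ℤ) := by
    intro nn
    have hN1 : 0 < nn.N 1 := nn.pos 1 one_ne_zero
    have key : ∀ v : LaurentSeries k, v ≠ 0 → nn.N (A v) / nn.N v = ε ^ (m : ℤ) := by
      intro v hv
      have hlv : 0 < lval ε v := by
        rw [lval, if_neg hv]; exact zpow_pos hε0 _
      rw [hNemul nn (A v), hNemul nn v, hAval v hv]
      field_simp
    have hset : {r : ℝ | ∃ v : LaurentSeries k, v ≠ 0 ∧ r = nn.N (A v) / nn.N v}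
        = {ε ^ (m : ℤ)} := by
      ext r
      simp only [Set.mem_setOf_eq, Set.mem_singleton_iff]
      constructor
      · rintro ⟨v, hv, rfl⟩; exact key v hv
      · rintro rfl; exact ⟨1, one_ne_zero, (key 1 one_ne_zero).symm⟩
    rw [opNorm, hset, csSup_singleton]
  have nn0 : NANorm k ε (LaurentSeries k) := by
    refine ⟨lval ε, ?_, ?_, ?_, ?_⟩
    · intro v hv; rw [lval, if_neg hv]; exact zpow_pos hε0 _
    · rw [lval, if_pos rfl]
    · intro v w
      by_cases hvw : v + w = 0
      · rw [lval, if_pos hvw]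
        exact le_max_of_le_left (ZNablaAux.lval_nonneg hε0 v)
      by_cases hv : v = 0
      · rw [hv, zero_add]; exact le_max_right _ _
      by_cases hw : w = 0
      · rw [hw, add_zero]; exact le_max_left _ _
      have hmin := HahnSeries.min_order_le_order_add hvw
      rw [lval, if_neg hvw, lval, if_neg hv, lval, if_neg hw]
      rcases le_total (HahnSeries.order v) (HahnSeries.order w) with hle | hle
      · refine le_max_of_le_left (zpow_le_zpow_right_of_le_one₀ hε0 hε1.le ?_)
        rw [min_eq_left hle] at hmin
        exact hmin
      · refine le_max_of_le_right (zpow_le_zpow_right_of_le_one₀ hε0 hε1.le ?_)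
        rw [min_eq_right hle] at hmin
        exact hmin
    · intro a v
      rw [smul_eq_mul]
      by_cases ha : a = 0
      · simp [ha, lval]
      by_cases hv : v = 0
      · simp [hv, lval]
      have hmul : a * v ≠ 0 := mul_ne_zero ha hv
      rw [lval, if_neg hmul, lval, if_neg ha, lval, if_neg hv,
        HahnSeries.order_mul ha hv, zpow_add₀ hε0.ne']
  have hsetinf : {r : ℝ | ∃ nn : NANorm k ε (LaurentSeries k), r = opNorm nn A}
      = {ε ^ (m : ℤ)} := by
    ext r
    simp only [Set.mem_setOf_eq, Set.mem_singleton_iff]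
    constructor
    · rintro ⟨nn, rfl⟩; exact hop nn
    · rintro rfl; exact ⟨nn0, (hop nn0).symm⟩
  rw [infNorm, hsetinf, csInf_singleton]
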